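/- arXiv:1910.06432 — 8 statements merged into one kernel-verified Lean document; each statement's English description precedes it below -/
import Mathlib

section
/- Let Q̃ be an M×M real matrix with zero row sums (∑_{j} Q̃(i,j) = 0 for every i), let α ∈ ℝ^M be a constant vector, and let T̃ ∈ ℝ. Define φ : ℝ → ℝ^M by φ(t) = −∫_t^{T̃} exp(Q̃(T̃−s)) α ds, where exp denotes the matrix exponential. Then φ(T̃) = 0 and for every t ∈ ℝ and every i, the component φ_i is differentiable with φ_i'(t) = ∑_{j ≠ i} Q̃(i,j) (φ_i(t) − φ_j(t)) + α_i. -/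
open NormedSpace MeasureTheory intervalIntegral

section aux

attribute [local instance] Matrix.linftyOpNormedRing Matrix.linftyOpNormedAlgebra

private lemma aux_hasDerivAt {M : ℕ} (Qt : Matrix (Fin M) (Fin M) ℝ) (α : Fin M → ℝ)
    (Tt : ℝ) (i : Fin M) (s : ℝ) :
    HasDerivAt (fun u => (NormedSpace.exp ((Tt - u) • Qt)).mulVec α i)
      (-(((Qt * NormedSpace.exp ((Tt - s) • Qt)).mulVec α) i)) s := by
  have h2 : HasDerivAt (fun u : ℝ => Tt - u) (-1) s := (hasDerivAt_id s).const_sub Tt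
  have h1 := hasDerivAt_exp_smul_const' (𝕂 := ℝ) Qt (Tt - s)
  have hE : HasDerivAt (fun u : ℝ => NormedSpace.exp ((Tt - u) • Qt))
      (-(Qt * NormedSpace.exp ((Tt - s) • Qt))) s := by
    have := h1.scomp s h2
    simp only [neg_one_smul, Function.comp_def] at this
    exact this
  let L : Matrix (Fin M) (Fin M) ℝ →ₗ[ℝ] ℝ :=
    { toFun := fun A => A.mulVec α i
      map_add' := fun A B => by simp [Matrix.add_mulVec]
      map_smul' := fun c A => by simp [Matrix.smul_mulVec] }
  have := (LinearMap.toContinuousLinearMap L).hasFDerivAt.comp_hasDerivAt s hE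
  simp only [L, Function.comp_def] at this
  refine this.congr_deriv ?_
  change L _ = _
  simp [L, Matrix.neg_mulVec]

end aux

/-- Let `Q̃` be an `M×M` real matrix with zero row sums, `α ∈ ℝ^M`, `T̃ ∈ ℝ`.
Define `φ(t) = −∫_t^{T̃} exp(Q̃(T̃−s)) α ds` (matrix exponential).  Then `φ(T̃) = 0` and for
every `t` and `i`, `φ_i` is differentiable with
`φ_i'(t) = ∑_{j ≠ i} Q̃(i,j) (φ_i(t) − φ_j(t)) + α_i`. -/
theorem stmt0 (M : ℕ) (hM : 1 ≤ M) (Qt : Matrix (Fin M) (Fin M) ℝ)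
    (hrow : ∀ i, ∑ j, Qt i j = 0) (α : Fin M → ℝ) (Tt : ℝ)
    (φ : ℝ → Fin M → ℝ)
    (hφ : ∀ t, φ t = -∫ s in t..Tt, (NormedSpace.exp ((Tt - s) • Qt)).mulVec α) :
    φ Tt = 0 ∧ ∀ t i, HasDerivAt (fun u => φ u i)
      ((∑ j ∈ Finset.univ.erase i, Qt i j * (φ t i - φ t j)) + α i) t := by
  set g : ℝ → Fin M → ℝ := fun s => (NormedSpace.exp ((Tt - s) • Qt)).mulVec α with hg
  -- continuity of each component of g
  have hgi : ∀ i : Fin M, Continuous fun s => g s i := by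
    intro i
    exact continuous_iff_continuousAt.2 fun s => (aux_hasDerivAt Qt α Tt i s).continuousAt
  have hgc : Continuous g := continuous_pi hgi
  -- componentwise formula for φ
  have hcomp : ∀ u (j : Fin M), φ u j = -∫ s in u..Tt, g s j := by
    intro u j
    have hint : IntervalIntegrable g volume u Tt := hgc.intervalIntegrable u Tt
    have h := (ContinuousLinearMap.proj (R := ℝ) (φ := fun _ : Fin M => ℝ)
        j).intervalIntegral_comp_comm hint
    have h2 : (∫ s in u..Tt, g s) j = ∫ s in u..Tt, g s j := h.symm
    rw [hφ u]
    simp [h2]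
  constructor
  · rw [hφ Tt, intervalIntegral.integral_same, neg_zero]
  intro t i
  -- derivative of φ · i at t is g t i
  have hderiv : HasDerivAt (fun u => φ u i) (g t i) t := by
    have hint : IntervalIntegrable (fun s => g s i) volume t Tt :=
      (hgi i).intervalIntegrable t Tt
    have h := intervalIntegral.integral_hasDerivAt_left hint
      ((hgi i).stronglyMeasurable.stronglyMeasurableAtFilter) (hgi i).continuousAt
    have h' := h.neg
    simp only [neg_neg] at h'
    have : (fun u => φ u i) = fun u => -∫ s in u..Tt, g s i := funext fun u => hcomp u i
    rw [this]
    exact h'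
  -- the claimed value equals g t i
  have hval : (∑ j ∈ Finset.univ.erase i, Qt i j * (φ t i - φ t j)) + α i = g t i := by
    have hsum : ∑ j ∈ Finset.univ.erase i, Qt i j * (φ t i - φ t j)
        = ∑ j, Qt i j * (φ t i - φ t j) := by
      rw [Finset.sum_erase]
      simp
    have hsum2 : ∑ j, Qt i j * (φ t i - φ t j) = -∑ j, Qt i j * φ t j := by
      simp only [mul_sub]
      rw [Finset.sum_sub_distrib, ← Finset.sum_mul, hrow i, zero_mul, zero_sub]
    -- compute ∑ j, Qt i j * φ t j
    have hint2 : ∀ j : Fin M, IntervalIntegrable (fun s => Qt i j * g s j) volume t Tt :=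
      fun j => (continuous_const.mul (hgi j)).intervalIntegrable t Tt
    have hswap : ∑ j, Qt i j * φ t j
        = -∫ s in t..Tt, ∑ j, Qt i j * g s j := by
      rw [intervalIntegral.integral_finset_sum (fun j _ => hint2 j), ← Finset.sum_neg_distrib]
      refine Finset.sum_congr rfl fun j _ => ?_
      rw [hcomp t j, intervalIntegral.integral_const_mul]
      ring
    have hrepr : ∀ s : ℝ, ∑ j, Qt i j * g s j = ((Qt * NormedSpace.exp ((Tt - s) • Qt)).mulVec α) i := by
      intro s
      rw [← Matrix.mulVec_mulVec]
      simp [hg, Matrix.mulVec, dotProduct]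
    have hftc : (∫ s in t..Tt, -(((Qt * NormedSpace.exp ((Tt - s) • Qt)).mulVec α) i))
        = g Tt i - g t i := by
      apply intervalIntegral.integral_eq_sub_of_hasDerivAt
      · intro s _
        exact aux_hasDerivAt Qt α Tt i s
      · apply Continuous.intervalIntegrable
        have : Continuous fun s => ∑ j, Qt i j * g s j :=
          continuous_finset_sum _ fun j _ => continuous_const.mul (hgi j)
        have h2 : Continuous fun s => ((Qt * NormedSpace.exp ((Tt - s) • Qt)).mulVec α) i := by
          simpa only [hrepr] using this
        exact h2.neg
    have hgT : g Tt i = α i := by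
      simp [hg, sub_self, zero_smul, NormedSpace.exp_zero, Matrix.one_mulVec]
    rw [hsum, hsum2, hswap]
    rw [show (fun s => ∑ j, Qt i j * g s j) = fun s => ((Qt * NormedSpace.exp ((Tt - s) • Qt)).mulVec α) i from funext hrepr]
    have := hftc
    rw [intervalIntegral.integral_neg] at this
    rw [show (∫ s in t..Tt, ((Qt * NormedSpace.exp ((Tt - s) • Qt)).mulVec α) i) = g t i - g Tt i by linarith [this]]
    rw [hgT]
    ring
  rw [hval]
  exact hderiv
end

section
/- Let λ̃_1, λ̃_2 ≥ 0 with λ̃_1 + λ̃_2 > 0, let α_1, α_2 ∈ ℝ, and let T̃ ∈ ℝ. For (i,j) ∈ {(1,2),(2,1)} define φ_i(t) = −(1/(λ̃_1+λ̃_2)) [ (λ̃_2 α_1 + λ̃_1 α_2)(T̃−t) + λ̃_i (α_i − α_j) (1 − e^{−(λ̃_1+λ̃_2)(T̃−t)})/(λ̃_1+λ̃_2) ]. Then φ_1(T̃) = φ_2(T̃) = 0 and for all t ∈ ℝ and (i,j) ∈ {(1,2),(2,1)}, φ_i'(t) = λ̃_i (φ_i(t) − φ_j(t)) + α_i. -/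
lemma aux_deriv (L b k Tt : ℝ) (hL : L ≠ 0) (t : ℝ) :
    HasDerivAt (fun t => -(1 / L) *
      (b * (Tt - t) + k * ((1 - Real.exp (-L * (Tt - t))) / L)))
      (-(1 / L) * (b * (-1) + k * (-(Real.exp (-L * (Tt - t)) * L) / L))) t := by
  have h0 : HasDerivAt (fun t : ℝ => -L * (Tt - t)) L t := by
    have := ((hasDerivAt_id t).const_sub Tt).const_mul (-L)
    simpa using this
  have hE : HasDerivAt (fun t : ℝ => Real.exp (-L * (Tt - t)))
      (Real.exp (-L * (Tt - t)) * L) t := h0.exp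
  have h1 : HasDerivAt (fun t : ℝ => b * (Tt - t)) (b * (-1)) t := by
    have := ((hasDerivAt_id t).const_sub Tt).const_mul b
    simpa using this
  have h2 : HasDerivAt (fun t : ℝ => k * ((1 - Real.exp (-L * (Tt - t))) / L))
      (k * (-(Real.exp (-L * (Tt - t)) * L) / L)) t := by
    have := ((hE.const_sub 1).div_const L).const_mul k
    simpa using this
  exact (h1.add h2).const_mul _

/-- Two-regime explicit solution of the reduced HJB ODE system.
For `(i,j) ∈ {(1,2),(2,1)}`,
`φ_i(t) = −(1/(λ̃₁+λ̃₂)) [ (λ̃₂α₁+λ̃₁α₂)(T̃−t) + λ̃_i(α_i−α_j)(1−e^{−(λ̃₁+λ̃₂)(T̃−t)})/(λ̃₁+λ̃₂) ]`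
satisfies `φ_i(T̃) = 0` and `φ_i'(t) = λ̃_i (φ_i(t) − φ_j(t)) + α_i`. -/
theorem stmt1 (l1 l2 : ℝ) (hl1 : 0 ≤ l1) (hl2 : 0 ≤ l2) (hpos : 0 < l1 + l2)
    (a1 a2 Tt : ℝ)
    (φ1 φ2 : ℝ → ℝ)
    (hφ1 : ∀ t, φ1 t = -(1 / (l1 + l2)) *
      ((l2 * a1 + l1 * a2) * (Tt - t) +
        l1 * (a1 - a2) * ((1 - Real.exp (-(l1 + l2) * (Tt - t))) / (l1 + l2))))
    (hφ2 : ∀ t, φ2 t = -(1 / (l1 + l2)) *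
      ((l2 * a1 + l1 * a2) * (Tt - t) +
        l2 * (a2 - a1) * ((1 - Real.exp (-(l1 + l2) * (Tt - t))) / (l1 + l2)))) :
    φ1 Tt = 0 ∧ φ2 Tt = 0 ∧
    (∀ t, HasDerivAt φ1 (l1 * (φ1 t - φ2 t) + a1) t) ∧
    (∀ t, HasDerivAt φ2 (l2 * (φ2 t - φ1 t) + a2) t) := by
  have hL : l1 + l2 ≠ 0 := ne_of_gt hpos
  refine ⟨by rw [hφ1]; simp, by rw [hφ2]; simp, ?_, ?_⟩ <;> intro t
  · have h := aux_deriv (l1 + l2) (l2 * a1 + l1 * a2) (l1 * (a1 - a2)) Tt hL t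
    have heq : φ1 = fun t => -(1 / (l1 + l2)) *
      ((l2 * a1 + l1 * a2) * (Tt - t) +
        l1 * (a1 - a2) * ((1 - Real.exp (-(l1 + l2) * (Tt - t))) / (l1 + l2))) :=
      funext hφ1
    rw [heq]
    convert h using 1
    simp only [hφ2]
    field_simp
    ring
  · have h := aux_deriv (l1 + l2) (l2 * a1 + l1 * a2) (l2 * (a2 - a1)) Tt hL t
    have heq : φ2 = fun t => -(1 / (l1 + l2)) *
      ((l2 * a1 + l1 * a2) * (Tt - t) +
        l2 * (a2 - a1) * ((1 - Real.exp (-(l1 + l2) * (Tt - t))) / (l1 + l2))) :=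
      funext hφ2
    rw [heq]
    convert h using 1
    simp only [hφ1]
    field_simp
    ring
end

section
/- Fix a finite index set J, constants γ > 0, ζ ∈ ℝ, w ∈ ℝ, ϕ₀ ∈ ℝ, and for each j ∈ J constants q̃_j > 0, q_j > 0, ϕ_j ∈ ℝ. Define f : ℝ × (J → ℝ) → ℝ by f(a, b) = (ζ a − ∑_{j∈J} q̃_j b_j) · γ e^{−γw+ϕ₀} − (a²/2) · γ² e^{−γw+ϕ₀} + ∑_{j∈J} q_j ( −e^{−γ(w+b_j)+ϕ_j} + e^{−γw+ϕ₀} ). Then f attains its global maximum at a* = ζ/γ and b_j* = −(1/γ)( log(q̃_j/q_j) + ϕ₀ − ϕ_j ); that is, f(a,b) ≤ f(a*, b*) for all (a,b) ∈ ℝ × (J → ℝ). -/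
/-- The inner optimization of the HJB equation under exponential utility.
With `f(a,b) = (ζa − ∑_j q̃_j b_j)·γe^{−γw+ϕ₀} − (a²/2)·γ²e^{−γw+ϕ₀}
  + ∑_j q_j(−e^{−γ(w+b_j)+ϕ_j} + e^{−γw+ϕ₀})`,
the global maximum is attained at `a* = ζ/γ` and
`b_j* = −(1/γ)(log(q̃_j/q_j) + ϕ₀ − ϕ_j)`. -/
theorem stmt6 (J : Type*) [Fintype J] (γ : ℝ) (hγ : 0 < γ) (ζ w ϕ0 : ℝ)
    (qt q : J → ℝ) (ϕ : J → ℝ) (hqt : ∀ j, 0 < qt j) (hq : ∀ j, 0 < q j)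
    (f : ℝ → (J → ℝ) → ℝ)
    (hf : ∀ a b, f a b =
      (ζ * a - ∑ j, qt j * b j) * (γ * Real.exp (-γ * w + ϕ0))
      - a ^ 2 / 2 * (γ ^ 2 * Real.exp (-γ * w + ϕ0))
      + ∑ j, q j * (-Real.exp (-γ * (w + b j) + ϕ j) + Real.exp (-γ * w + ϕ0))) :
    ∀ a b, f a b ≤ f (ζ / γ) (fun j => -(1 / γ) * (Real.log (qt j / q j) + ϕ0 - ϕ j)) := by
  intro a b
  rw [hf, hf]
  set E := Real.exp (-γ * w + ϕ0) with hEdef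
  have hE : 0 < E := Real.exp_pos _
  set bs : J → ℝ := fun j => -(1 / γ) * (Real.log (qt j / q j) + ϕ0 - ϕ j) with hbs
  -- per-coordinate inequality in b
  have key : ∀ j ∈ Finset.univ (α := J),
      (-(qt j * b j * (γ * E)) + q j * (-Real.exp (-γ * (w + b j) + ϕ j) + E))
      ≤ (-(qt j * bs j * (γ * E)) + q j * (-Real.exp (-γ * (w + bs j) + ϕ j) + E)) := by
    intro j _
    have hq' := hq j
    have hqt' := hqt j
    have hx0 : Real.exp (-γ * (w + bs j) + ϕ j) = E * (qt j / q j) := by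
      have harg : -γ * (w + bs j) + ϕ j = (-γ * w + ϕ0) + Real.log (qt j / q j) := by
        simp only [hbs]
        field_simp
        ring
      rw [harg, Real.exp_add, Real.exp_log (div_pos hqt' hq')]
    have h1 : Real.exp (-γ * (w + bs j) + ϕ j) *
        (1 + ((-γ * (w + b j) + ϕ j) - (-γ * (w + bs j) + ϕ j)))
        ≤ Real.exp (-γ * (w + b j) + ϕ j) := by
      have hle := Real.add_one_le_exp ((-γ * (w + b j) + ϕ j) - (-γ * (w + bs j) + ϕ j))
      have hpos := Real.exp_pos (-γ * (w + bs j) + ϕ j)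
      calc Real.exp (-γ * (w + bs j) + ϕ j) *
            (1 + ((-γ * (w + b j) + ϕ j) - (-γ * (w + bs j) + ϕ j)))
          ≤ Real.exp (-γ * (w + bs j) + ϕ j) *
            Real.exp ((-γ * (w + b j) + ϕ j) - (-γ * (w + bs j) + ϕ j)) := by
            nlinarith
        _ = Real.exp (-γ * (w + b j) + ϕ j) := by
            rw [← Real.exp_add]; ring_nf
    rw [hx0] at h1 ⊢
    have h3 : qt j * E * (1 + ((-γ * (w + b j) + ϕ j) - (-γ * (w + bs j) + ϕ j)))
        ≤ q j * Real.exp (-γ * (w + b j) + ϕ j) := by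
      have h2 := mul_le_mul_of_nonneg_left h1 hq'.le
      have heq : q j * (E * (qt j / q j) *
          (1 + ((-γ * (w + b j) + ϕ j) - (-γ * (w + bs j) + ϕ j))))
          = qt j * E * (1 + ((-γ * (w + b j) + ϕ j) - (-γ * (w + bs j) + ϕ j))) := by
        calc q j * (E * (qt j / q j) *
              (1 + ((-γ * (w + b j) + ϕ j) - (-γ * (w + bs j) + ϕ j))))
            = (qt j / q j * q j) *
              (E * (1 + ((-γ * (w + b j) + ϕ j) - (-γ * (w + bs j) + ϕ j)))) := by ring
          _ = qt j * (E * (1 + ((-γ * (w + b j) + ϕ j) - (-γ * (w + bs j) + ϕ j)))) := by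
              rw [div_mul_cancel₀ _ hq'.ne']
          _ = _ := by ring
      linarith [heq ▸ h2]
    have hqE : q j * (-(E * (qt j / q j)) + E) = -(qt j * E) + q j * E := by
      calc q j * (-(E * (qt j / q j)) + E) = -((qt j / q j * q j) * E) + q j * E := by ring
        _ = _ := by rw [div_mul_cancel₀ _ hq'.ne']
    rw [hqE]
    nlinarith [h3]
  have hsum := Finset.sum_le_sum key
  -- a-part
  have hstar1 : ζ * (ζ / γ) * (γ * E) = ζ ^ 2 * E := by field_simp
  have hstar2 : (ζ / γ) ^ 2 / 2 * (γ ^ 2 * E) = ζ ^ 2 / 2 * E := by field_simp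
  have ha : ζ * a * (γ * E) - a ^ 2 / 2 * (γ ^ 2 * E)
      ≤ ζ * (ζ / γ) * (γ * E) - (ζ / γ) ^ 2 / 2 * (γ ^ 2 * E) := by
    rw [hstar1, hstar2]
    nlinarith [sq_nonneg (γ * a - ζ), hE]
  -- expansion lemma
  have expand : ∀ (a' : ℝ) (c : J → ℝ),
      (ζ * a' - ∑ j, qt j * c j) * (γ * E) - a' ^ 2 / 2 * (γ ^ 2 * E)
      + ∑ j, q j * (-Real.exp (-γ * (w + c j) + ϕ j) + E)
      = (ζ * a' * (γ * E) - a' ^ 2 / 2 * (γ ^ 2 * E))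
      + ∑ j, (-(qt j * c j * (γ * E)) + q j * (-Real.exp (-γ * (w + c j) + ϕ j) + E)) := by
    intro a' c
    rw [Finset.sum_add_distrib]
    have : ∑ j, -(qt j * c j * (γ * E)) = -((∑ j, qt j * c j) * (γ * E)) := by
      rw [Finset.sum_neg_distrib, ← Finset.sum_mul]
    rw [this]
    ring
  rw [expand a b, expand (ζ / γ) bs]
  linarith
end

section
/- Let Q̃ be an M×M real matrix with zero row sums and strictly positive off-diagonal entries q̃_{ij} > 0 (i ≠ j), let q_{ij} > 0 (i ≠ j), let ζ ∈ ℝ^M, γ > 0, and define α_i := ζ_i²/2 + ∑_{j≠i} ( q̃_{ij} log(q̃_{ij}/q_{ij}) − q̃_{ij} + q_{ij} ). Suppose φ : ℝ → ℝ^M is differentiable with φ_i'(t) = ∑_{j≠i} q̃_{ij}(φ_i(t) − φ_j(t)) + α_i for all i and t. Define u_i(t,w) = −e^{−γw+φ_i(t)}. Then for every i, t, and w, the function f(a,b) = (ζ_i a − ∑_{j≠i} q̃_{ij} b_j) ∂_w u_i(t,w) + (a²/2) ∂_{ww} u_i(t,w) + ∑_{j≠i} q_{ij}( u_j(t, w+b_j)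 − u_i(t,w) ) over (a,b) ∈ ℝ × ℝ^{M−1} has supremum attained at a* = ζ_i/γ, b_j* = −(1/γ)(log(q̃_{ij}/q_{ij}) + φ_i(t) − φ_j(t)), and ∂_t u_i(t,w) + f(a*, b*) = 0. In other words, u solves the HJB system ∂_t u_i + max_{(a,b)} f(a,b) = 0. -/
/-- verification that `u_i(t,w) = −e^{−γw+φ_i(t)}` solves the HJB system
`∂_t u_i + max_{(a,b)} f(a,b) = 0`, where
`f(a,b) = (ζ_i a − ∑_{j≠i} q̃_{ij} b_j) ∂_w u_i + (a²/2) ∂_{ww} u_i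
          + ∑_{j≠i} q_{ij}(u_j(t,w+b_j) − u_i(t,w))`,
with the maximum attained at `a* = ζ_i/γ`,
`b_j* = −(1/γ)(log(q̃_{ij}/q_{ij}) + φ_i(t) − φ_j(t))`. -/
theorem stmt7 (M : ℕ) (hM : 2 ≤ M) (Qt : Matrix (Fin M) (Fin M) ℝ)
    (hrow : ∀ i, ∑ j, Qt i j = 0) (hoff : ∀ i j, i ≠ j → 0 < Qt i j)
    (q : Fin M → Fin M → ℝ) (hq : ∀ i j, i ≠ j → 0 < q i j)
    (ζ : Fin M → ℝ) (γ : ℝ) (hγ : 0 < γ) (α : Fin M → ℝ)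
    (hα : ∀ i, α i = ζ i ^ 2 / 2 +
      ∑ j ∈ Finset.univ.erase i, (Qt i j * Real.log (Qt i j / q i j) - Qt i j + q i j))
    (φ : ℝ → Fin M → ℝ)
    (hφ : ∀ i t, HasDerivAt (fun u => φ u i)
      ((∑ j ∈ Finset.univ.erase i, Qt i j * (φ t i - φ t j)) + α i) t)
    (u : Fin M → ℝ → ℝ → ℝ)
    (hu : ∀ i t w, u i t w = -Real.exp (-γ * w + φ t i))
    (f : (i : Fin M) → ℝ → ℝ → ℝ → ({j : Fin M // j ≠ i} → ℝ) → ℝ)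
    (hf : ∀ i t w a b, f i t w a b =
      (ζ i * a - ∑ j : {j : Fin M // j ≠ i}, Qt i (j : Fin M) * b j)
          * (γ * Real.exp (-γ * w + φ t i))
      + a ^ 2 / 2 * (-(γ ^ 2) * Real.exp (-γ * w + φ t i))
      + ∑ j : {j : Fin M // j ≠ i}, q i (j : Fin M) * (u (j : Fin M) t (w + b j) - u i t w)) :
    ∀ (i : Fin M) (t w : ℝ),
      (∀ (a : ℝ) (b : {j : Fin M // j ≠ i} → ℝ),
        f i t w a b ≤ f i t w (ζ i / γ)
          (fun j => -(1 / γ) * (Real.log (Qt i (j : Fin M) / q i (j : Fin M))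
            + φ t i - φ t (j : Fin M)))) ∧
      HasDerivAt (fun s => u i s w)
        (-(f i t w (ζ i / γ)
          (fun j => -(1 / γ) * (Real.log (Qt i (j : Fin M) / q i (j : Fin M))
            + φ t i - φ t (j : Fin M))))) t := by
  intro i t w
  have hγ' : γ ≠ 0 := ne_of_gt hγ
  set E : ℝ := Real.exp (-γ * w + φ t i) with hE
  have hEpos : 0 < E := Real.exp_pos _
  set bs : {j : Fin M // j ≠ i} → ℝ :=
    fun j => -(1 / γ) * (Real.log (Qt i (j : Fin M) / q i (j : Fin M))
      + φ t i - φ t (j : Fin M)) with hbs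
  have hQpos : ∀ j : {j : Fin M // j ≠ i}, 0 < Qt i (j : Fin M) :=
    fun j => hoff i j (Ne.symm j.2)
  have hqpos : ∀ j : {j : Fin M // j ≠ i}, 0 < q i (j : Fin M) :=
    fun j => hq i j (Ne.symm j.2)
  have hexp : ∀ j : {j : Fin M // j ≠ i},
      Real.exp (-γ * (w + bs j) + φ t (j : Fin M))
        = E * (Qt i (j : Fin M) / q i (j : Fin M)) := by
    intro j
    have hdiv : 0 < Qt i (j : Fin M) / q i (j : Fin M) := div_pos (hQpos j) (hqpos j)
    rw [show -γ * (w + bs j) + φ t (j : Fin M)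
        = (-γ * w + φ t i) + Real.log (Qt i (j : Fin M) / q i (j : Fin M)) by
      simp only [hbs]; field_simp; ring]
    rw [Real.exp_add, Real.exp_log hdiv, hE]
  have hkey : ∀ j : {j : Fin M // j ≠ i},
      q i (j : Fin M) * Real.exp (-γ * (w + bs j) + φ t (j : Fin M))
        = Qt i (j : Fin M) * E := by
    intro j
    rw [hexp j]
    field_simp [(hqpos j).ne']
  have e1 : ζ i * (ζ i / γ) * (γ * E) = ζ i ^ 2 * E := by field_simp
  have e2 : (ζ i / γ) ^ 2 / 2 * (-(γ ^ 2) * E) = -(ζ i ^ 2 / 2 * E) := by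
    field_simp
  constructor
  · intro a b
    have frw : ∀ (a : ℝ) (c : {j : Fin M // j ≠ i} → ℝ), f i t w a c =
        (ζ i * a * (γ * E) + a ^ 2 / 2 * (-(γ ^ 2) * E)) +
        ∑ j : {j : Fin M // j ≠ i},
          (q i (j : Fin M) * (u (j : Fin M) t (w + c j) - u i t w)
            - Qt i (j : Fin M) * c j * (γ * E)) := by
      intro a c
      rw [hf, ← hE, sub_mul, Finset.sum_mul, Finset.sum_sub_distrib]
      ring
    rw [frw a b, frw (ζ i / γ) bs]
    apply add_le_add
    · rw [e1, e2]
      nlinarith [mul_nonneg hEpos.le (sq_nonneg (a * γ - ζ i))]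
    · apply Finset.sum_le_sum
      intro j _
      have hconv : Real.exp (-γ * (w + bs j) + φ t (j : Fin M)) * (1 + γ * (bs j - b j))
          ≤ Real.exp (-γ * (w + b j) + φ t (j : Fin M)) := by
        have h1 : Real.exp (-γ * (w + b j) + φ t (j : Fin M)) =
            Real.exp (-γ * (w + bs j) + φ t (j : Fin M)) * Real.exp (γ * (bs j - b j)) := by
          rw [← Real.exp_add]; ring_nf
        rw [h1]
        have h2 := Real.add_one_le_exp (γ * (bs j - b j))
        have h3 := (Real.exp_pos (-γ * (w + bs j) + φ t (j : Fin M))).le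
        nlinarith
      have h2 : Qt i (j : Fin M) * E * (1 + γ * (bs j - b j))
          ≤ q i (j : Fin M) * Real.exp (-γ * (w + b j) + φ t (j : Fin M)) := by
        rw [← hkey j]
        nlinarith [mul_le_mul_of_nonneg_left hconv (hqpos j).le]
      simp only [hu]
      rw [← hE]
      nlinarith [h2, hkey j, hEpos, (hQpos j), (hqpos j)]
  · have hsub1 : ∑ j ∈ Finset.univ.erase i, (E * q i j - E * Qt i j)
        = ∑ j : {j : Fin M // j ≠ i}, (E * q i (j : Fin M) - E * Qt i (j : Fin M)) :=
      Finset.sum_subtype _ (by intro x; simp [Finset.mem_erase]) _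
    have hsub2 : ∑ j ∈ Finset.univ.erase i,
          (-(1 / γ) * (Qt i j * Real.log (Qt i j / q i j))
            + -(1 / γ) * (Qt i j * (φ t i - φ t j)))
        = ∑ j : {j : Fin M // j ≠ i},
          (-(1 / γ) * (Qt i (j : Fin M) * Real.log (Qt i (j : Fin M) / q i (j : Fin M)))
            + -(1 / γ) * (Qt i (j : Fin M) * (φ t i - φ t (j : Fin M)))) :=
      Finset.sum_subtype _ (by intro x; simp [Finset.mem_erase]) _
    have h1 : ∀ j : {j : Fin M // j ≠ i},
        q i (j : Fin M) * (u (j : Fin M) t (w + bs j) - u i t w)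
          = E * q i (j : Fin M) - E * Qt i (j : Fin M) := by
      intro j
      rw [hu, hu, hexp j, ← hE]
      field_simp [(hqpos j).ne']
      ring
    have h3 : ∀ j : {j : Fin M // j ≠ i},
        Qt i (j : Fin M) * bs j
          = -(1 / γ) * (Qt i (j : Fin M) * Real.log (Qt i (j : Fin M) / q i (j : Fin M)))
            + -(1 / γ) * (Qt i (j : Fin M) * (φ t i - φ t (j : Fin M))) := by
      intro j; simp only [hbs]; ring
    have hfeq : f i t w (ζ i / γ) bs
        = E * ((∑ j ∈ Finset.univ.erase i, Qt i j * (φ t i - φ t j)) + α i) := by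
      rw [hf, ← hE, hα]
      rw [Finset.sum_congr rfl (fun j _ => h1 j)]
      rw [Finset.sum_congr rfl (fun j _ => h3 j)]
      rw [← hsub1, ← hsub2]
      simp only [Finset.sum_add_distrib, Finset.sum_sub_distrib, ← Finset.mul_sum]
      field_simp
      ring
    have hueq : (fun s => u i s w) = fun s => -Real.exp (-γ * w + φ s i) :=
      funext fun s => hu i s w
    have hderiv : HasDerivAt (fun s => -Real.exp (-γ * w + φ s i))
        (-(Real.exp (-γ * w + φ t i)
          * ((∑ j ∈ Finset.univ.erase i, Qt i j * (φ t i - φ t j)) + α i))) t :=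
      (((hφ i t).const_add (-γ * w)).exp).neg
    rw [hueq, hfeq, hE]
    exact hderiv
end

section
/- Let Q̃ be an M×M real matrix with zero row sums, let μ, σ ∈ ℝ^M with σ_i ≠ 0 for a fixed regime i, and for each k = 1,…,M let g^{(k)} : ℝ → ℝ^M be differentiable with (g^{(k)}_l)'(t) + (μ_l + σ_l²/2) g^{(k)}_l(t) + ∑_{m≠l} Q̃(l,m) ( g^{(k)}_m(t) − g^{(k)}_l(t) ) = 0 for every l and t. Define the M×M matrix Γ(t) whose (i,k) entry is σ_i g^{(k)}_i(t) and whose (j,k) entry for j ≠ i is g^{(k)}_j(t) − g^{(k)}_i(t). Then for all t, t₀ ∈ ℝ: det Γ(t) = exp( −∑_{k=1}^M ( μ_k + σ_k²/2 + Q̃(k,k) ) (t − t₀) ) · det Γ(t₀). -/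
open Matrix Finset

noncomputable def detCLM (n : ℕ) : ContinuousMultilinearMap ℝ (fun _ : Fin n => Fin n → ℝ) ℝ :=
  (Matrix.detRowAlternating (R := ℝ) (n := Fin n)).toMultilinearMap.mkContinuous
    (n.factorial) (by
      intro m
      have h1 : (Matrix.detRowAlternating (R := ℝ) (n := Fin n)) m = Matrix.det (Matrix.of m) := rfl
      show ‖(Matrix.detRowAlternating (R := ℝ) (n := Fin n)) m‖ ≤ _
      rw [h1, Matrix.det_apply]
      calc ‖∑ σ : Equiv.Perm (Fin n), Equiv.Perm.sign σ • ∏ i, Matrix.of m (σ i) i‖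
          ≤ ∑ σ : Equiv.Perm (Fin n), ‖Equiv.Perm.sign σ • ∏ i, Matrix.of m (σ i) i‖ :=
            norm_sum_le _ _
        _ ≤ ∑ σ : Equiv.Perm (Fin n), ∏ i, ‖m i‖ := by
            refine Finset.sum_le_sum fun σ _ => ?_
            have h2 : ‖Equiv.Perm.sign σ • ∏ i, Matrix.of m (σ i) i‖
                = ‖∏ i, Matrix.of m (σ i) i‖ := by
              rcases Int.units_eq_one_or (Equiv.Perm.sign σ) with h | h <;>
                simp [h, Units.smul_def]
            rw [h2]
            calc ‖∏ i, Matrix.of m (σ i) i‖ ≤ ∏ i, ‖m (σ i)‖ := by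
                  rw [norm_prod]
                  refine Finset.prod_le_prod (fun _ _ => norm_nonneg _) fun i _ => ?_
                  exact norm_le_pi_norm (m (σ i)) i
              _ = ∏ i, ‖m i‖ := Equiv.prod_comp σ fun j => ‖m j‖
        _ = (n.factorial : ℝ) * ∏ i, ‖m i‖ := by
            rw [Finset.sum_const, nsmul_eq_mul]
            congr 1
            simp [Fintype.card_perm])

theorem detCLM_apply {n : ℕ} (m : Fin n → Fin n → ℝ) :
    detCLM n m = Matrix.det (Matrix.of m) := rfl

theorem hasDerivAt_det {n : ℕ} (A : ℝ → Matrix (Fin n) (Fin n) ℝ)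
    (A' : Matrix (Fin n) (Fin n) ℝ) (t : ℝ)
    (h : ∀ r k, HasDerivAt (fun u => A u r k) (A' r k) t) :
    HasDerivAt (fun u => (A u).det) (∑ r, ((A t).updateRow r (A' r)).det) t := by
  have hrow : ∀ r, HasFDerivAt (fun u => A u r)
      ((1 : ℝ →L[ℝ] ℝ).smulRight (A' r)) t :=
    fun r => (hasDerivAt_pi.2 (h r)).hasFDerivAt
  have H := HasFDerivAt.multilinear_comp (detCLM n) hrow
  have H2 := H.hasDerivAt
  refine HasDerivAt.congr_deriv H2 ?_
  symm
  simp only [ContinuousLinearMap.sum_apply, ContinuousLinearMap.comp_apply,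
    ContinuousLinearMap.smulRight_apply, ContinuousLinearMap.one_apply, one_smul,
    ContinuousMultilinearMap.toContinuousLinearMap_apply]
  refine Finset.sum_congr rfl fun r _ => ?_
  rw [detCLM_apply]
  rfl

/-- Under the RS-GBM model, the determinant of the coefficient matrix `Γ(t)`
(with diffusion row `σ_i g^{(k)}_i(t)` and jump rows `g^{(k)}_j(t) − g^{(k)}_i(t)`, `j ≠ i`)
satisfies `det Γ(t) = exp(−∑_k (μ_k + σ_k²/2 + Q̃(k,k))(t − t₀)) det Γ(t₀)`. -/
theorem stmt8 (M : ℕ) (hM : 1 ≤ M) (Qt : Matrix (Fin M) (Fin M) ℝ)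
    (hrow : ∀ l, ∑ m, Qt l m = 0)
    (μ σ : Fin M → ℝ) (i : Fin M) (hσ : σ i ≠ 0)
    (g : Fin M → ℝ → Fin M → ℝ)
    (hg : ∀ k l t, HasDerivAt (fun u => g k u l)
      (-((μ l + σ l ^ 2 / 2) * g k t l
        + ∑ m ∈ Finset.univ.erase l, Qt l m * (g k t m - g k t l))) t)
    (Γ : ℝ → Matrix (Fin M) (Fin M) ℝ)
    (hΓ : ∀ t r k, Γ t r k = if r = i then σ i * g k t i else g k t r - g k t i) :
    ∀ t t₀ : ℝ, (Γ t).det =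
      Real.exp (-(∑ k, (μ k + σ k ^ 2 / 2 + Qt k k)) * (t - t₀)) * (Γ t₀).det := by
  classical
  intro t t₀
  set γ : ℝ := -(∑ k, (μ k + σ k ^ 2 / 2 + Qt k k)) with hγ
  -- key sum identity from zero row sums
  have key : ∀ (r l : Fin M) (v : Fin M → ℝ),
      ∑ m ∈ Finset.univ.erase l, Qt r m * (v m - v l) = ∑ m, Qt r m * v m := by
    intro r l v
    have h0 : ∑ m ∈ Finset.univ.erase l, Qt r m * (v m - v l)
        = ∑ m, Qt r m * (v m - v l) := by
      rw [← Finset.sum_erase_add Finset.univ _ (Finset.mem_univ l)]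
      simp
    rw [h0]
    simp only [mul_sub]
    rw [Finset.sum_sub_distrib, ← Finset.sum_mul, hrow r, zero_mul, sub_zero]
  -- coefficient matrix
  set a : Fin M → Fin M → ℝ := fun r m =>
    if r = i then (if m = i then -(μ i + σ i ^ 2 / 2) else -(σ i * Qt i m))
    else (if m = i then ((μ i + σ i ^ 2 / 2) - (μ r + σ r ^ 2 / 2)) / σ i
      else Qt i m - Qt r m - (if m = r then (μ r + σ r ^ 2 / 2) else 0)) with ha
  -- each entry of Γ has derivative given by a · Γ
  have hderiv : ∀ (s : ℝ) (r k : Fin M),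
      HasDerivAt (fun u => Γ u r k) (∑ m, a r m * Γ s m k) s := by
    intro s r k
    by_cases hr : r = i
    · subst hr
      have hfun : (fun u => Γ u r k) = fun u => σ r * g k u r := by
        funext u; rw [hΓ, if_pos rfl]
      rw [hfun]
      have := (hg k r s).const_mul (σ r)
      refine HasDerivAt.congr_deriv this ?_
      symm
      rw [← Finset.sum_erase_add Finset.univ _ (Finset.mem_univ r)]
      have hL : ∀ m ∈ Finset.univ.erase r,
          a r m * Γ s m k = -(σ r * (Qt r m * (g k s m - g k s r))) := by
        intro m hm
        have hmi : m ≠ r := Finset.ne_of_mem_erase hm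
        rw [ha]
        simp only [eq_self_iff_true, if_true, if_neg hmi]
        rw [hΓ, if_neg hmi]
        ring
      rw [Finset.sum_congr rfl hL]
      rw [ha]
      simp only [eq_self_iff_true, if_true]
      rw [hΓ, if_pos rfl]
      rw [Finset.sum_neg_distrib, ← Finset.mul_sum]
      ring
    · have hfun : (fun u => Γ u r k) = fun u => g k u r - g k u i := by
        funext u; rw [hΓ, if_neg hr]
      rw [hfun]
      have := (hg k r s).sub (hg k i s)
      refine HasDerivAt.congr_deriv this ?_
      symm
      rw [← Finset.sum_erase_add Finset.univ _ (Finset.mem_univ i)]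
      have hL : ∀ m ∈ Finset.univ.erase i,
          a r m * Γ s m k = (Qt i m * (g k s m - g k s i) - Qt r m * (g k s m - g k s i))
            - (if m = r then (μ r + σ r ^ 2 / 2) * (g k s m - g k s i) else 0) := by
        intro m hm
        have hmi : m ≠ i := Finset.ne_of_mem_erase hm
        rw [ha]
        simp only [if_neg hr, if_neg hmi]
        rw [hΓ, if_neg hmi]
        by_cases hmr : m = r
        · simp only [if_pos hmr]; ring
        · simp only [if_neg hmr]; ring
      rw [Finset.sum_congr rfl hL, Finset.sum_sub_distrib, Finset.sum_sub_distrib]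
      have hite : ∑ m ∈ Finset.univ.erase i,
          (if m = r then (μ r + σ r ^ 2 / 2) * (g k s m - g k s i) else 0)
          = (μ r + σ r ^ 2 / 2) * (g k s r - g k s i) := by
        rw [Finset.sum_ite_eq' (Finset.univ.erase i)]
        rw [if_pos (Finset.mem_erase.2 ⟨hr, Finset.mem_univ r⟩)]
      rw [hite, key i i (g k s), key r i (g k s)]
      rw [ha]
      simp only [if_neg hr, eq_self_iff_true, if_true]
      rw [hΓ, if_pos rfl]
      rw [key r r (g k s)]
      field_simp
      ring
  -- trace of a
  have htr : ∑ r, a r r = γ := by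
    rw [← Finset.sum_erase_add Finset.univ _ (Finset.mem_univ i)]
    have e1 : ∀ r ∈ Finset.univ.erase i,
        a r r = Qt i r - (μ r + σ r ^ 2 / 2 + Qt r r) := by
      intro r hrI
      have hrne : r ≠ i := Finset.ne_of_mem_erase hrI
      rw [ha]
      simp only [if_neg hrne, eq_self_iff_true, if_true]
      ring
    rw [Finset.sum_congr rfl e1, Finset.sum_sub_distrib]
    have e2 : ∑ r ∈ Finset.univ.erase i, Qt i r = -Qt i i := by
      have h := hrow i
      rw [← Finset.sum_erase_add Finset.univ _ (Finset.mem_univ i)] at h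
      linarith
    rw [e2]
    have e3 : a i i = -(μ i + σ i ^ 2 / 2) := by rw [ha]; simp
    rw [e3, hγ, ← Finset.sum_erase_add Finset.univ _ (Finset.mem_univ i)]
    ring
  -- derivative of det
  have hDet : ∀ s : ℝ, HasDerivAt (fun u => (Γ u).det) (γ * (Γ s).det) s := by
    intro s
    have H := hasDerivAt_det Γ (Matrix.of fun r k => ∑ m, a r m * Γ s m k) s
      (fun r k => hderiv s r k)
    convert H using 1
    have hrowfun : ∀ r : Fin M,
        (Matrix.of fun r k => ∑ m, a r m * Γ s m k) r = ∑ m, a r m • Γ s m := by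
      intro r; funext k
      simp [Finset.sum_apply]
    have : ∑ r, ((Γ s).updateRow r ((Matrix.of fun r k => ∑ m, a r m * Γ s m k) r)).det
        = ∑ r, a r r * (Γ s).det := by
      refine Finset.sum_congr rfl fun r _ => ?_
      rw [hrowfun r, Matrix.det_updateRow_sum]
      simp [smul_eq_mul]
    rw [this, ← Finset.sum_mul, htr]
  -- solve the ODE
  set φ : ℝ → ℝ := fun u => Real.exp (-γ * u) * (Γ u).det with hφdef
  have hφ : ∀ s : ℝ, HasDerivAt φ 0 s := by
    intro s
    have h1 : HasDerivAt (fun u => Real.exp (-γ * u)) (Real.exp (-γ * s) * -γ) s := by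
      simpa using ((hasDerivAt_id s).const_mul (-γ)).exp
    have h2 := h1.mul (hDet s)
    refine HasDerivAt.congr_deriv h2 ?_
    symm
    ring
  have hconst : φ t = φ t₀ :=
    is_const_of_deriv_eq_zero (fun x => (hφ x).differentiableAt)
      (fun x => (hφ x).deriv) t t₀
  have hexp : Real.exp (-γ * t) ≠ 0 := Real.exp_ne_zero _
  have : (Γ t).det = Real.exp (γ * t) * (Real.exp (-γ * t₀) * (Γ t₀).det) := by
    have h := hconst
    rw [hφdef] at h
    simp only at h
    have h2 : Real.exp (γ * t) * (Real.exp (-γ * t) * (Γ t).det)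
        = Real.exp (γ * t) * (Real.exp (-γ * t₀) * (Γ t₀).det) := by rw [h]
    rwa [← mul_assoc, ← Real.exp_add, (by ring : γ * t + -γ * t = 0), Real.exp_zero,
      one_mul] at h2
  rw [this, ← mul_assoc, ← Real.exp_add]
  congr 2
  ring
end

section
/- Let Q̃ be an M×M real matrix with zero row sums, let μ, σ ∈ ℝ^M with σ_i ≠ 0 for a fixed regime i, and for each k = 1,…,M let g^{(k)} : ℝ → ℝ^M be differentiable with (g^{(k)}_l)'(t) + (μ_l + σ_l²/2) g^{(k)}_l(t) + ∑_{m≠l} Q̃(l,m) ( g^{(k)}_m(t) − g^{(k)}_l(t) ) = 0 for every l and t. Define the M×M matrix Γ(t) whose (i,k) entry is σ_i g^{(k)}_i(t) and whose (j,k) entry for j ≠ i is g^{(k)}_j(t) − g^{(k)}_i(t). If Γ(t₀) is invertible for some t₀ ∈ ℝ, then Γ(t) is invertible for every t ∈ ℝ. -/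
open NormedSpace

section Aux

attribute [local instance] Matrix.linftyOpNormedRing Matrix.linftyOpNormedAlgebra

/-- If `G` solves the linear matrix ODE `G' = B * G` (entrywise hypothesis), then the
determinant of `G` is nonzero at every time whenever it is nonzero at one time. -/
private lemma matrix_ode_det_ne_zero {M : ℕ} (B : Matrix (Fin M) (Fin M) ℝ)
    (G : ℝ → Matrix (Fin M) (Fin M) ℝ)
    (hG : ∀ u l k, HasDerivAt (fun v => G v l k) ((B * G u) l k) u)
    (t₀ t : ℝ) (h0 : (G t₀).det ≠ 0) : (G t).det ≠ 0 := by
  classical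
  -- pass from entrywise derivatives to a matrix-valued derivative
  let e0 : Matrix (Fin M) (Fin M) ℝ ≃ₗ[ℝ] (Fin M → Fin M → ℝ) :=
    { toFun := fun A l k => A l k
      invFun := fun f => Matrix.of f
      map_add' := fun _ _ => rfl
      map_smul' := fun _ _ => rfl
      left_inv := fun _ => rfl
      right_inv := fun _ => rfl }
  let e := e0.toContinuousLinearEquiv
  have hGm : ∀ u, HasDerivAt G (B * G u) u := by
    intro u
    have hpi : HasDerivAt (fun v => e (G v)) (e (B * G u)) u := by
      refine hasDerivAt_pi.mpr fun l => hasDerivAt_pi.mpr fun k => ?_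
      exact hG u l k
    have h2 := ((e.symm : (Fin M → Fin M → ℝ) →L[ℝ]
      Matrix (Fin M) (Fin M) ℝ).hasFDerivAt.comp_hasDerivAt u hpi)
    have h3 : (⇑e.symm ∘ fun v => e (G v)) = G := funext fun v => e.symm_apply_apply (G v)
    have h4 : HasDerivAt (⇑e.symm ∘ fun v => e (G v)) (e.symm (e (B * G u))) u := h2
    rw [h3, e.symm_apply_apply] at h4
    exact h4
  set E : ℝ → Matrix (Fin M) (Fin M) ℝ := fun u => exp ((t₀ - u) • B) with hEdef
  have hcomm : ∀ u, E u * B = B * E u := fun u =>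
    (((Commute.refl B).smul_left (t₀ - u)).exp_left)
  have hEd : ∀ u, HasDerivAt E (-(B * E u)) u := by
    intro u
    have h1 : HasDerivAt (fun v : ℝ => t₀ - v) (-1) u := (hasDerivAt_id u).const_sub t₀
    have h2 := hasDerivAt_exp_smul_const' (𝕂 := ℝ) B (t₀ - u)
    have h3 := HasDerivAt.scomp u h2 h1
    simp [neg_smul] at h3
    exact h3
  have hh : ∀ u, HasDerivAt (fun v => E v * G v) 0 u := by
    intro u
    have hmul := (hEd u).mul (hGm u)
    have hc : -(B * E u) * G u + E u * (B * G u) = 0 := by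
      rw [← mul_assoc, hcomm u, neg_mul, neg_add_cancel]
    rwa [hc] at hmul
  have hconst : E t * G t = E t₀ * G t₀ := by
    have hdiff : Differentiable ℝ (fun v => E v * G v) :=
      fun u => (hh u).differentiableAt
    exact is_const_of_deriv_eq_zero hdiff (fun u => (hh u).deriv) t t₀
  have hE0 : E t₀ = 1 := by
    rw [hEdef]
    simp [exp_zero]
  have hGG : G t₀ = E t * G t := by
    rw [hconst, hE0, one_mul]
  -- E t is a unit
  have hcne : Commute ((t₀ - t) • B) (-((t₀ - t) • B)) := (Commute.refl _).neg_right
  have h1 : E t * exp (-((t₀ - t) • B)) = 1 := by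
    rw [hEdef]; beta_reduce; have hx := exp_add_of_commute hcne; rw [add_neg_cancel, exp_zero] at hx; exact hx.symm
  have h2 : exp (-((t₀ - t) • B)) * E t = 1 := by
    rw [hEdef]; beta_reduce; have hx := exp_add_of_commute hcne.symm; rw [neg_add_cancel, exp_zero] at hx; exact hx.symm
  have hu : IsUnit (E t) := ⟨⟨E t, exp (-((t₀ - t) • B)), h1, h2⟩, rfl⟩
  intro hzero
  apply h0
  rw [hGG, Matrix.det_mul, hzero, mul_zero]

end Aux

/-- Under the RS-GBM model, if the coefficient matrix `Γ(t₀)` is invertible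
for some time `t₀`, then `Γ(t)` is invertible for every time `t`. -/
theorem stmt9 (M : ℕ) (hM : 1 ≤ M) (Qt : Matrix (Fin M) (Fin M) ℝ)
    (hrow : ∀ l, ∑ m, Qt l m = 0)
    (μ σ : Fin M → ℝ) (i : Fin M) (hσ : σ i ≠ 0)
    (g : Fin M → ℝ → Fin M → ℝ)
    (hg : ∀ k l t, HasDerivAt (fun u => g k u l)
      (-((μ l + σ l ^ 2 / 2) * g k t l
        + ∑ m ∈ Finset.univ.erase l, Qt l m * (g k t m - g k t l))) t)
    (Γ : ℝ → Matrix (Fin M) (Fin M) ℝ)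
    (hΓ : ∀ t r k, Γ t r k = if r = i then σ i * g k t i else g k t r - g k t i)
    (t₀ : ℝ) (h₀ : IsUnit (Γ t₀)) :
    ∀ t : ℝ, IsUnit (Γ t) := by
  classical
  intro t
  -- coefficient matrix of the ODE
  set B : Matrix (Fin M) (Fin M) ℝ := Matrix.of fun l m =>
    if m = l then -(μ l + σ l ^ 2 / 2) + ∑ m' ∈ Finset.univ.erase l, Qt l m'
    else -Qt l m with hBdef
  -- fundamental matrix of solutions
  set G : ℝ → Matrix (Fin M) (Fin M) ℝ := fun u => Matrix.of fun l k => g k u l with hGdef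
  -- translation matrix
  set S : Matrix (Fin M) (Fin M) ℝ := Matrix.of fun r m =>
    if r = i then (if m = i then σ i else 0)
    else if m = r then 1 else if m = i then -1 else 0 with hSdef
  have hGd : ∀ u l k, HasDerivAt (fun v => G v l k) ((B * G u) l k) u := by
    intro u l k
    have hent : (B * G u) l k =
        -((μ l + σ l ^ 2 / 2) * g k u l
          + ∑ m ∈ Finset.univ.erase l, Qt l m * (g k u m - g k u l)) := by
      rw [Matrix.mul_apply, ← Finset.add_sum_erase _ _ (Finset.mem_univ l)]
      have hBll : B l l = -(μ l + σ l ^ 2 / 2) + ∑ m' ∈ Finset.univ.erase l, Qt l m' := by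
        simp [hBdef]
      have hrest : ∑ m ∈ Finset.univ.erase l, B l m * G u m k
          = ∑ m ∈ Finset.univ.erase l, -Qt l m * g k u m := by
        refine Finset.sum_congr rfl fun m hm => ?_
        have hml : m ≠ l := (Finset.mem_erase.mp hm).1
        simp [hBdef, hGdef, hml]
      rw [hBll, hrest]
      have : ∑ m ∈ Finset.univ.erase l, Qt l m * (g k u m - g k u l)
          = (∑ m ∈ Finset.univ.erase l, Qt l m * g k u m)
            - (∑ m ∈ Finset.univ.erase l, Qt l m) * g k u l := by
        rw [Finset.sum_mul, ← Finset.sum_sub_distrib]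
        exact Finset.sum_congr rfl fun m _ => by ring
      rw [this]
      simp only [hGdef, Matrix.of_apply, neg_mul, Finset.sum_neg_distrib]
      ring
    rw [hent]
    exact hg k l u
  have hSG : ∀ u, Γ u = S * G u := by
    intro u
    ext r k
    rw [hΓ, Matrix.mul_apply]
    by_cases hr : r = i
    · rw [if_pos hr]
      have : ∀ m, S r m * G u m k = if m = i then σ i * g k u m else 0 := by
        intro m
        by_cases hm : m = i <;> simp [hSdef, hGdef, hr, hm]
      rw [Finset.sum_congr rfl fun m _ => this m, Finset.sum_ite_eq' Finset.univ i]
      simp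
    · rw [if_neg hr]
      have : ∀ m, S r m * G u m k =
          (if m = r then g k u m else 0) + (if m = i then -g k u m else 0) := by
        intro m
        by_cases h1 : m = r
        · simp [hSdef, hGdef, hr, h1, h1 ▸ hr]
        · by_cases h2 : m = i <;> simp [hSdef, hGdef, hr, Ne.symm hr, h1, h2]
      rw [Finset.sum_congr rfl fun m _ => this m, Finset.sum_add_distrib,
        Finset.sum_ite_eq' Finset.univ r, Finset.sum_ite_eq' Finset.univ i]
      simp [sub_eq_add_neg]
  have hdet0 : (Γ t₀).det ≠ 0 := by
    have := (Matrix.isUnit_iff_isUnit_det _).mp h₀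
    exact this.ne_zero
  have hprod : S.det * (G t₀).det ≠ 0 := by
    rw [← Matrix.det_mul, ← hSG]; exact hdet0
  obtain ⟨hSne, hG0⟩ := mul_ne_zero_iff.mp hprod
  have hGt : (G t).det ≠ 0 := matrix_ode_det_ne_zero B G hGd t₀ t hG0
  rw [Matrix.isUnit_iff_isUnit_det, hSG t, Matrix.det_mul]
  exact (mul_ne_zero hSne hGt).isUnit
end

section
/- Let Q̃ be an M×M real matrix, let κ ≠ 0, θ, σ ∈ ℝ^M, T ∈ ℝ, and let h : ℝ → ℝ^M be differentiable with h_i'(t) + ( κ θ_i e^{−κ(T−t)} + (σ_i²/2) e^{−2κ(T−t)} ) h_i(t) + ∑_{j≠i} Q̃(i,j) ( h_j(t) − h_i(t) ) = 0 for every i and t, and h_i(T) = 1. Define F_i(t,x) = exp( e^{−κ(T−t)} x ) h_i(t). Then F_i(T,x) = e^x for all x, and for every i, t, and x: ∂_t F_i(t,x) + κ(θ_i − x) ∂_x F_i(t,x) + (σ_i²/2) ∂_{xx} F_i(t,x) + ∑_{j≠i} Q̃(i,j) ( F_j(t,x) − F_i(t,x) ) = 0. -/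
/-- RS-XOU with common mean-reversion speed `κ ≠ 0`.  If `h` solves
`h_i' + (κθ_i e^{−κ(T−t)} + (σ_i²/2)e^{−2κ(T−t)}) h_i + ∑_{j≠i} Q̃(i,j)(h_j − h_i) = 0`
with `h_i(T) = 1`, then `F_i(t,x) = exp(e^{−κ(T−t)}x) h_i(t)` satisfies `F_i(T,x) = e^x`
and the pricing PDE
`∂_t F_i + κ(θ_i − x)∂_x F_i + (σ_i²/2)∂_{xx}F_i + ∑_{j≠i} Q̃(i,j)(F_j − F_i) = 0`. -/
theorem stmt14 (M : ℕ) (hM : 1 ≤ M) (Qt : Matrix (Fin M) (Fin M) ℝ)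
    (κ : ℝ) (hκ : κ ≠ 0) (θ σ : Fin M → ℝ) (T : ℝ)
    (h : ℝ → Fin M → ℝ)
    (hh : ∀ i t, HasDerivAt (fun u => h u i)
      (-((κ * θ i * Real.exp (-κ * (T - t)) + σ i ^ 2 / 2 * Real.exp (-2 * κ * (T - t)))
          * h t i
        + ∑ j ∈ Finset.univ.erase i, Qt i j * (h t j - h t i))) t)
    (hhT : ∀ i, h T i = 1)
    (F : Fin M → ℝ → ℝ → ℝ)
    (hF : ∀ i t x, F i t x = Real.exp (Real.exp (-κ * (T - t)) * x) * h t i) :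
    (∀ i x, F i T x = Real.exp x) ∧
    ∀ i t x,
      deriv (fun u => F i u x) t
      + κ * (θ i - x) * deriv (fun y => F i t y) x
      + σ i ^ 2 / 2 * deriv (deriv (fun y => F i t y)) x
      + ∑ j ∈ Finset.univ.erase i, Qt i j * (F j t x - F i t x) = 0 := by
  -- spatial derivative
  have key : ∀ (i : Fin M) (t x : ℝ), HasDerivAt (fun y => F i t y)
      (Real.exp (-κ * (T - t)) * (Real.exp (Real.exp (-κ * (T - t)) * x) * h t i)) x := by
    intro i t x
    have : ∀ y, F i t y = Real.exp (Real.exp (-κ * (T - t)) * y) * h t i := fun y => hF i t y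
    simp only [funext this]
    have hd : HasDerivAt (fun y : ℝ => Real.exp (Real.exp (-κ * (T - t)) * y))
        (Real.exp (Real.exp (-κ * (T - t)) * x) * (Real.exp (-κ * (T - t)) * 1)) x :=
      ((hasDerivAt_id x).const_mul _).exp
    have := hd.mul_const (h t i)
    refine this.congr_deriv ?_
    ring
  constructor
  · intro i x
    rw [hF i T x, hhT i]
    simp
  · intro i t x
    set E : ℝ := Real.exp (-κ * (T - t)) with hE
    -- time derivative
    have h1 : HasDerivAt (fun u : ℝ => -κ * (T - u)) κ t := by
      have := ((hasDerivAt_id t).const_sub T).const_mul (-κ)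
      refine this.congr_deriv ?_
      ring
    have h2 : HasDerivAt (fun u : ℝ => Real.exp (-κ * (T - u)) * x) (κ * E * x) t := by
      have := (h1.exp).mul_const x
      refine this.congr_deriv ?_
      ring
    have h3 : HasDerivAt (fun u : ℝ => F i u x)
        (Real.exp (E * x) * (κ * E * x) * h t i + Real.exp (E * x) *
          (-((κ * θ i * E + σ i ^ 2 / 2 * Real.exp (-2 * κ * (T - t))) * h t i
            + ∑ j ∈ Finset.univ.erase i, Qt i j * (h t j - h t i)))) t := by
      have : ∀ u, F i u x = Real.exp (Real.exp (-κ * (T - u)) * x) * h u i := fun u => hF i u x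
      simp only [funext this]
      exact (h2.exp).mul (hh i t)
    rw [h3.deriv, (key i t x).deriv]
    have hdd : deriv (fun y => F i t y) = fun y => E * (Real.exp (E * y) * h t i) := by
      funext y
      exact (key i t y).deriv
    rw [hdd]
    have h4 : HasDerivAt (fun y : ℝ => E * (Real.exp (E * y) * h t i))
        (E * (E * (Real.exp (E * x) * h t i))) x := by
      have hd : HasDerivAt (fun y : ℝ => Real.exp (E * y))
          (Real.exp (E * x) * (E * 1)) x := ((hasDerivAt_id x).const_mul E).exp
      have := (hd.mul_const (h t i)).const_mul E
      refine this.congr_deriv ?_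
      ring
    rw [h4.deriv]
    have hsum : ∑ j ∈ Finset.univ.erase i, Qt i j * (F j t x - F i t x)
        = Real.exp (E * x) * ∑ j ∈ Finset.univ.erase i, Qt i j * (h t j - h t i) := by
      rw [Finset.mul_sum]
      refine Finset.sum_congr rfl fun j _ => ?_
      rw [hF j t x, hF i t x]
      ring
    rw [hsum]
    have hE2 : Real.exp (-2 * κ * (T - t)) = E * E := by
      rw [hE, ← Real.exp_add]
      ring_nf
    rw [hE2]
    ring
end

section
/- Let κ ≠ 0, θ, σ ∈ ℝ, s ∈ ℝ, and let Ĝ : ℝ → ℂ be differentiable. Define F̂ : ℝ × ℝ → ℂ by F̂(t,ω) = exp( κ(s−t) − θ i ω (1 − e^{κ(s−t)}) + (σ²ω²/(4κ)) (1 − e^{2κ(s−t)}) ) · Ĝ( e^{κ(s−t)} ω ), where i is the imaginary unit. Then F̂(s,ω) = Ĝ(ω) for all ω, and for all t and ω: ∂_t F̂(t,ω) + κ ω ∂_ω F̂(t,ω) + ( κ θ i ω + κ − ω²σ²/2 ) F̂(t,ω) = 0. -/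
open Complex in
/-- Method-of-characteristics solution of the frequency-space PDE arising in
the FST method: with
`F̂(t,ω) = exp(κ(s−t) − θiω(1−e^{κ(s−t)}) + (σ²ω²/(4κ))(1−e^{2κ(s−t)})) Ĝ(e^{κ(s−t)}ω)`,
one has `F̂(s,ω) = Ĝ(ω)` and
`∂_t F̂ + κω ∂_ω F̂ + (κθiω + κ − ω²σ²/2) F̂ = 0`. -/
theorem stmt15 (κ : ℝ) (hκ : κ ≠ 0) (θ σ s : ℝ)
    (G : ℝ → ℂ) (hG : Differentiable ℝ G)
    (F : ℝ → ℝ → ℂ)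
    (hF : ∀ t ω, F t ω = Complex.exp (
        (κ * (s - t) : ℝ)
        - (θ : ℂ) * Complex.I * (ω : ℂ) * (1 - (Real.exp (κ * (s - t)) : ℝ))
        + ((σ ^ 2 * ω ^ 2 / (4 * κ) : ℝ) : ℂ) * (1 - (Real.exp (2 * κ * (s - t)) : ℝ)))
      * G (Real.exp (κ * (s - t)) * ω)) :
    (∀ ω, F s ω = G ω) ∧
    ∀ t ω : ℝ,
      deriv (fun u => F u ω) t
      + (κ * ω : ℝ) * deriv (fun v => F t v) ω
      + ((κ : ℂ) * (θ : ℂ) * Complex.I * (ω : ℂ) + (κ : ℂ) - (ω ^ 2 * σ ^ 2 / 2 : ℝ))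
          * F t ω = 0 := by
  constructor
  · intro ω
    simp [hF s ω, sub_self]
  intro t ω
  set E : ℝ := Real.exp (κ * (s - t)) with hE_def
  set E2 : ℝ := Real.exp (2 * κ * (s - t)) with hE2_def
  set x : ℝ := E * ω with hx_def
  -- real inner derivatives
  have hlin : HasDerivAt (fun u : ℝ => κ * (s - u)) (-κ) t := by
    simpa using (((hasDerivAt_id t).const_sub s).const_mul κ)
  have hlin2 : HasDerivAt (fun u : ℝ => 2 * κ * (s - u)) (-(2 * κ)) t := by
    simpa using (((hasDerivAt_id t).const_sub s).const_mul (2 * κ))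
  have hE : HasDerivAt (fun u : ℝ => Real.exp (κ * (s - u))) (-κ * E) t := by
    simpa [hE_def, mul_comm] using hlin.exp
  have hE2 : HasDerivAt (fun u : ℝ => Real.exp (2 * κ * (s - u))) (-(2 * κ) * E2) t := by
    simpa [hE2_def, mul_comm] using hlin2.exp
  -- derivative in t of the exponent
  have hAt : HasDerivAt (fun u : ℝ => ((κ * (s - u) : ℝ) : ℂ)
      - (θ : ℂ) * Complex.I * (ω : ℂ) * (1 - (Real.exp (κ * (s - u)) : ℝ))
      + ((σ ^ 2 * ω ^ 2 / (4 * κ) : ℝ) : ℂ) * (1 - (Real.exp (2 * κ * (s - u)) : ℝ)))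
      (((-κ : ℝ) : ℂ) - (θ : ℂ) * Complex.I * (ω : ℂ) * (-((-κ * E : ℝ) : ℂ))
        + ((σ ^ 2 * ω ^ 2 / (4 * κ) : ℝ) : ℂ) * (-((-(2 * κ) * E2 : ℝ) : ℂ))) t := by
    refine HasDerivAt.add (HasDerivAt.sub hlin.ofReal_comp ?_) ?_
    · exact ((hE.ofReal_comp.const_sub 1).const_mul ((θ : ℂ) * Complex.I * (ω : ℂ)))
    · exact ((hE2.ofReal_comp.const_sub 1).const_mul (((σ ^ 2 * ω ^ 2 / (4 * κ) : ℝ) : ℂ)))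
  -- derivative in t of G ∘ inner
  have hinG : HasDerivAt (fun u : ℝ => Real.exp (κ * (s - u)) * ω) (-κ * E * ω) t :=
    hE.mul_const ω
  have hGt : HasDerivAt (fun u : ℝ => G (Real.exp (κ * (s - u)) * ω))
      ((-κ * E * ω) • deriv G x) t := by
    exact ((hG x).hasDerivAt).scomp t hinG
  have hFt : HasDerivAt (fun u : ℝ => F u ω)
      (Complex.exp (((κ * (s - t) : ℝ) : ℂ)
        - (θ : ℂ) * Complex.I * (ω : ℂ) * (1 - (E : ℝ))
        + ((σ ^ 2 * ω ^ 2 / (4 * κ) : ℝ) : ℂ) * (1 - (E2 : ℝ)))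
        * (((-κ : ℝ) : ℂ) - (θ : ℂ) * Complex.I * (ω : ℂ) * (-((-κ * E : ℝ) : ℂ))
          + ((σ ^ 2 * ω ^ 2 / (4 * κ) : ℝ) : ℂ) * (-((-(2 * κ) * E2 : ℝ) : ℂ))) * G x
      + Complex.exp (((κ * (s - t) : ℝ) : ℂ)
        - (θ : ℂ) * Complex.I * (ω : ℂ) * (1 - (E : ℝ))
        + ((σ ^ 2 * ω ^ 2 / (4 * κ) : ℝ) : ℂ) * (1 - (E2 : ℝ)))
        * ((-κ * E * ω) • deriv G x)) t := by
    have heq : (fun u : ℝ => F u ω) = fun u : ℝ => Complex.exp (((κ * (s - u) : ℝ) : ℂ)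
        - (θ : ℂ) * Complex.I * (ω : ℂ) * (1 - (Real.exp (κ * (s - u)) : ℝ))
        + ((σ ^ 2 * ω ^ 2 / (4 * κ) : ℝ) : ℂ) * (1 - (Real.exp (2 * κ * (s - u)) : ℝ)))
        * G (Real.exp (κ * (s - u)) * ω) := funext fun u => hF u ω
    rw [heq]
    exact hAt.cexp.mul hGt
  -- derivative in ω
  have hvc : HasDerivAt (fun v : ℝ => ((v : ℝ) : ℂ)) 1 ω := by
    simpa using (hasDerivAt_id ω).ofReal_comp
  have hsq : HasDerivAt (fun v : ℝ => (σ ^ 2 * v ^ 2 / (4 * κ) : ℝ))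
      (σ ^ 2 * (2 * ω) / (4 * κ)) ω := by
    have h := ((hasDerivAt_pow 2 ω).const_mul (σ ^ 2)).div_const (4 * κ)
    simpa using h
  have hAω : HasDerivAt (fun v : ℝ => ((κ * (s - t) : ℝ) : ℂ)
      - (θ : ℂ) * Complex.I * (v : ℂ) * (1 - (E : ℝ))
      + ((σ ^ 2 * v ^ 2 / (4 * κ) : ℝ) : ℂ) * (1 - (E2 : ℝ)))
      (0 - (θ : ℂ) * Complex.I * (1 - (E : ℝ))
        + ((σ ^ 2 * (2 * ω) / (4 * κ) : ℝ) : ℂ) * (1 - (E2 : ℝ))) ω := by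
    refine HasDerivAt.add (HasDerivAt.sub (hasDerivAt_const ω _) ?_) ?_
    · have h := (hvc.const_mul ((θ : ℂ) * Complex.I)).mul_const (1 - ((E : ℝ) : ℂ))
      simpa [mul_comm, mul_assoc, mul_left_comm] using h
    · exact hsq.ofReal_comp.mul_const _
  have hinGω : HasDerivAt (fun v : ℝ => E * v) E ω := by
    simpa using (hasDerivAt_id ω).const_mul E
  have hGω : HasDerivAt (fun v : ℝ => G (E * v)) (E • deriv G x) ω :=
    ((hG x).hasDerivAt).scomp ω hinGω
  have hFω : HasDerivAt (fun v : ℝ => F t v)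
      (Complex.exp (((κ * (s - t) : ℝ) : ℂ)
        - (θ : ℂ) * Complex.I * (ω : ℂ) * (1 - (E : ℝ))
        + ((σ ^ 2 * ω ^ 2 / (4 * κ) : ℝ) : ℂ) * (1 - (E2 : ℝ)))
        * (0 - (θ : ℂ) * Complex.I * (1 - (E : ℝ))
          + ((σ ^ 2 * (2 * ω) / (4 * κ) : ℝ) : ℂ) * (1 - (E2 : ℝ))) * G x
      + Complex.exp (((κ * (s - t) : ℝ) : ℂ)
        - (θ : ℂ) * Complex.I * (ω : ℂ) * (1 - (E : ℝ))
        + ((σ ^ 2 * ω ^ 2 / (4 * κ) : ℝ) : ℂ) * (1 - (E2 : ℝ)))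
        * (E • deriv G x)) ω := by
    have heq : (fun v : ℝ => F t v) = fun v : ℝ => Complex.exp (((κ * (s - t) : ℝ) : ℂ)
        - (θ : ℂ) * Complex.I * (v : ℂ) * (1 - (E : ℝ))
        + ((σ ^ 2 * v ^ 2 / (4 * κ) : ℝ) : ℂ) * (1 - (E2 : ℝ)))
        * G (E * v) := funext fun v => hF t v
    rw [heq]
    exact hAω.cexp.mul hGω
  rw [hFt.deriv, hFω.deriv, hF t ω]
  set ex : ℂ := Complex.exp (((κ * (s - t) : ℝ) : ℂ)
        - (θ : ℂ) * Complex.I * (ω : ℂ) * (1 - (E : ℝ))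
        + ((σ ^ 2 * ω ^ 2 / (4 * κ) : ℝ) : ℂ) * (1 - (E2 : ℝ)))
  simp only [Complex.real_smul]
  push_cast
  have hκ' : (κ : ℂ) ≠ 0 := by exact_mod_cast hκ
  field_simp
  ring
end
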